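/- If C ⊆ L(Mₙ) is a right-CP-invariant cone of linear maps and Ψ : Mₙ → Mₙ, then Ψ† ∘ Φ is completely positive for all Φ ∈ C if and only if Ψ belongs to the dual cone C°. -/

import Mathlib

set_option maxHeartbeats 1000000


open scoped ComplexOrder Pointwise
open Matrix

noncomputable section

/-- `n × n` complex matrices. -/
abbrev Mat (n : ℕ) : Type := Matrix (Fin n) (Fin n) ℂ

/-- `M_m ⊗ M_n`, realized as matrices indexed by `Fin m × Fin n`. -/
abbrev Mat2 (m n : ℕ) : Type := Matrix (Fin m × Fin n) (Fin m × Fin n) ℂ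

/-- `(id_m ⊗ Φ)(X)`: apply `Φ` to each `n × n` block of `X`. -/
def rmap {m n : ℕ} (Φ : Mat n → Mat n) (X : Mat2 m n) : Mat2 m n :=
  Matrix.of fun p q => Φ (Matrix.of fun k l => X (p.1, k) (q.1, l)) p.2 q.2

/-- `(Φ ⊗ id_n)(X)`. -/
def lmap {m n : ℕ} (Φ : Mat m → Mat m) (X : Mat2 m n) : Mat2 m n :=
  Matrix.of fun p q => Φ (Matrix.of fun i j => X (i, p.2) (j, q.2)) p.1 q.1

/-- The unnormalized maximally entangled matrix `E = Σ_{i,j} e_ie_j* ⊗ e_ie_j*`. -/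
def Emat (n : ℕ) : Mat2 n n :=
  Matrix.of fun p q => if p.1 = p.2 ∧ q.1 = q.2 then 1 else 0

/-- The Choi matrix `C_Φ = (id_n ⊗ Φ)(E)`. -/
def choi {n : ℕ} (Φ : Mat n → Mat n) : Mat2 n n := rmap Φ (Emat n)

/-- `Ψ` is the Hilbert–Schmidt adjoint of `Φ`: `Tr(Φ(X)Y) = Tr(X Ψ(Y))`. -/
def IsAdjoint {n : ℕ} (Φ Ψ : Mat n → Mat n) : Prop :=
  ∀ X Y : Mat n, ((Φ X) * Y).trace = (X * Ψ Y).trace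

/-- Complete positivity of a map on `M_n`. -/
def IsCP {n : ℕ} (Φ : Mat n → Mat n) : Prop :=
  ∀ m : ℕ, ∀ X : Mat2 m n, X.PosSemidef → (rmap Φ X).PosSemidef

/-- Positivity of a map on `M_n`. -/
def IsPos {n : ℕ} (Φ : Mat n → Mat n) : Prop :=
  ∀ X : Mat n, X.PosSemidef → (Φ X).PosSemidef

/-- `(Ad_A ⊗ id_n)(X)` for a rectangular `A ∈ M_{m₁,m₂}`, where `Ad_A(Y) = A* Y A`. -/
def adT {m₁ m₂ n : ℕ} (A : Matrix (Fin m₁) (Fin m₂) ℂ) (X : Mat2 m₁ n) : Mat2 m₂ n :=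
  Matrix.of fun p q => ∑ i, ∑ j, (star (A i p.1)) * X (i, p.2) (j, q.2) * A j q.1

/-- Tensor product `Y ⊗ Z ∈ M_n ⊗ M_n`. -/
def kron {n : ℕ} (Y Z : Mat n) : Mat2 n n :=
  Matrix.of fun p q => Y p.1 q.1 * Z p.2 q.2

/-- Block-positivity: `(v* ⊗ w*) Y (v ⊗ w) ≥ 0` for all `v, w`. -/
def BlockPos {n : ℕ} (Y : Mat2 n n) : Prop :=
  ∀ v w : Fin n → ℂ,
    0 ≤ star (fun p : Fin n × Fin n => v p.1 * w p.2) ⬝ᵥ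
        (Y *ᵥ fun p : Fin n × Fin n => v p.1 * w p.2)

/-- Separability: a sum of tensor products of positive semidefinite matrices. -/
def SepMat {n : ℕ} (Y : Mat2 n n) : Prop :=
  ∃ (k : ℕ) (Z W : Fin k → Mat n),
    (∀ i, (Z i).PosSemidef) ∧ (∀ i, (W i).PosSemidef) ∧ Y = ∑ i, kron (Z i) (W i)

/-- The dual cone of a cone of (linear) maps, under the Choi-matrix pairing. -/
def dualC {n : ℕ} (C : Set (Mat n → Mat n)) : Set (Mat n → Mat n) :=
  {Ψ | IsLinearMap ℂ Ψ ∧ ∀ Φ ∈ C, 0 ≤ ((choi Φ) * (choi Ψ)).trace}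

/-- Right-CP-invariance: closed under right composition with completely positive maps. -/
def RightCPInv {n : ℕ} (C : Set (Mat n → Mat n)) : Prop :=
  ∀ Φ ∈ C, ∀ Ψ : Mat n → Mat n, IsCP Ψ → Φ ∘ Ψ ∈ C

/-- A convex cone of maps: closed under addition and nonnegative scaling. -/
def IsConvexConeMaps {n : ℕ} (C : Set (Mat n → Mat n)) : Prop :=
  (∀ Φ ∈ C, ∀ Ψ ∈ C, Φ + Ψ ∈ C) ∧ (∀ Φ ∈ C, ∀ c : ℝ, 0 ≤ c → c • Φ ∈ C)

/-- A convex cone of matrices: closed under addition and nonnegative scaling. -/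
def IsConvexConeMat {m n : ℕ} (C : Set (Mat2 m n)) : Prop :=
  (∀ X ∈ C, ∀ Y ∈ C, X + Y ∈ C) ∧ (∀ X ∈ C, ∀ c : ℝ, 0 ≤ c → c • X ∈ C)

/-- The flip (swap) operator `F ∈ M_n ⊗ M_n`, `F(a ⊗ b) = b ⊗ a`. -/
def flipMat (n : ℕ) : Mat2 n n :=
  Matrix.of fun p q => if p.1 = q.2 ∧ p.2 = q.1 then 1 else 0

/-- Column-stacking vectorization of a matrix, as an element of `ℂⁿ ⊗ ℂⁿ`. -/
def vecM {n : ℕ} (X : Mat n) : Fin n × Fin n → ℂ := fun p => X p.2 p.1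

/-- The family of cones generated by a cone `Cₙ ⊆ Mₙ ⊗ Mₙ`:
`C_m = { Σᵢ (Ad_{Aᵢ} ⊗ id_n)(X) : Aᵢ ∈ M_{n,m}, X ∈ Cₙ }`. -/
def genCone {n : ℕ} (Cn : Set (Mat2 n n)) (m : ℕ) : Set (Mat2 m n) :=
  {Y | ∃ (k : ℕ) (A : Fin k → Matrix (Fin n) (Fin m) ℂ) (X : Mat2 n n),
    X ∈ Cn ∧ Y = ∑ i, adT (A i) X}


section Aux
abbrev Eb {n : ℕ} (i j : Fin n) : Mat n := Matrix.single i j (1:ℂ)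

lemma trace_Eb_mul {n : ℕ} (i j : Fin n) (M : Mat n) : (Eb i j * M).trace = M j i := by
  simp [Matrix.trace, Matrix.diag, Matrix.mul_apply, Matrix.single, ite_and,
    Finset.sum_ite_eq]

lemma star_single {k : Type*} [Fintype k] [DecidableEq k] (r : k) :
    star (Pi.single r (1:ℂ)) = (Pi.single r 1 : k → ℂ) := by
  ext s; by_cases h : s = r <;> simp [Pi.single_apply, h]

lemma single_quad {k : Type*} [Fintype k] [DecidableEq k] (M : Matrix k k ℂ) (i j : k) :
    (Pi.single i (1:ℂ)) ⬝ᵥ (M *ᵥ (Pi.single j 1 : k → ℂ)) = M i j := by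
  simp [Matrix.mulVec_single, single_dotProduct]

lemma quad_pair {k : Type*} [Fintype k] [DecidableEq k] (M : Matrix k k ℂ) (p q : k)
    (a b : ℂ) :
    star (a • (Pi.single p 1 : k → ℂ) + b • (Pi.single q 1 : k → ℂ)) ⬝ᵥ
      (M *ᵥ (a • (Pi.single p 1 : k → ℂ) + b • (Pi.single q 1 : k → ℂ))) =
    star a * a * M p p + star a * b * M p q + star b * a * M q p + star b * b * M q q := by
  simp only [star_add, star_smul, mulVec_add, mulVec_smul, add_dotProduct, smul_dotProduct,
    dotProduct_add, dotProduct_smul, star_single, single_quad, smul_eq_mul]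
  ring

lemma posSemidef_of_quad {k : Type*} [Fintype k] [DecidableEq k] (M : Matrix k k ℂ)
    (h : ∀ x : k → ℂ, 0 ≤ star x ⬝ᵥ (M *ᵥ x)) : M.PosSemidef := by
  refine Matrix.PosSemidef.of_dotProduct_mulVec_nonneg ?_ h
  have hre : ∀ x : k → ℂ, (star x ⬝ᵥ (M *ᵥ x)).im = 0 := fun x =>
    ((Complex.nonneg_iff.mp (h x)).2).symm
  have hdiag : ∀ r : k, (M r r).im = 0 := by
    intro r
    have := hre (Pi.single r 1)
    rwa [star_single, single_quad] at this
  ext p q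
  rw [conjTranspose_apply]
  have h1 := hre ((1:ℂ) • (Pi.single q 1 : k → ℂ) + (1:ℂ) • (Pi.single p 1 : k → ℂ))
  have h2 := hre ((1:ℂ) • (Pi.single q 1 : k → ℂ) + Complex.I • (Pi.single p 1 : k → ℂ))
  rw [quad_pair M q p] at h1 h2
  simp only [star_one, one_mul, mul_one, Complex.star_def, Complex.conj_I, Complex.add_im,
    Complex.mul_im, Complex.I_re, Complex.I_im, Complex.neg_re, Complex.neg_im,
    Complex.mul_re, hdiag p, hdiag q] at h1 h2
  apply Complex.ext
  · rw [Complex.star_def, Complex.conj_re]; linarith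
  · rw [Complex.star_def, Complex.conj_im]; linarith


lemma choi_apply {n : ℕ} (Φ : Mat n → Mat n) (p q : Fin n × Fin n) :
    choi Φ p q = Φ (Eb p.1 q.1) p.2 q.2 := by
  rfl

lemma pairing {n : ℕ} (Φ' Ψ' : Mat n → Mat n) :
    ((choi Φ') * (choi Ψ')).trace = ∑ i, ∑ j, ((Φ' (Eb i j)) * (Ψ' (Eb j i))).trace := by
  simp only [Matrix.trace, Matrix.diag, Matrix.mul_apply, choi_apply, Fintype.sum_prod_type]
  exact Finset.sum_congr rfl fun i _ => Finset.sum_comm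


lemma Emat_posSemidef {n : ℕ} : (Emat n).PosSemidef := by
  apply posSemidef_of_quad
  intro x
  have hv : Emat n *ᵥ x = fun p => if p.1 = p.2 then (∑ i, x (i, i)) else 0 := by
    funext p
    by_cases hp : p.1 = p.2 <;>
      simp [Matrix.mulVec, dotProduct, Emat, Fintype.sum_prod_type, hp, ite_and, ite_mul,
        Finset.sum_ite_eq]
  rw [hv]
  have : star x ⬝ᵥ (fun p : Fin n × Fin n => if p.1 = p.2 then (∑ i, x (i, i)) else 0)
      = star (∑ i, x (i, i)) * (∑ i, x (i, i)) := by
    simp [dotProduct, Fintype.sum_prod_type, mul_ite, Finset.sum_ite_eq, ← Finset.sum_mul]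
  rw [this]
  exact star_mul_self_nonneg _

lemma pair_adj {n : ℕ} {Ψ Ψd : Mat n → Mat n} (hadj : IsAdjoint Ψ Ψd)
    (Φ' : Mat n → Mat n) :
    ((choi Φ') * (choi Ψ)).trace = ∑ i, ∑ j, (Ψd (Φ' (Eb i j))) i j := by
  rw [pairing]
  refine Finset.sum_congr rfl fun i _ => Finset.sum_congr rfl fun j _ => ?_
  rw [Matrix.trace_mul_comm, hadj, trace_Eb_mul]

lemma quad_diagvec {n : ℕ} (Λ : Mat n → Mat n) :
    star (fun p : Fin n × Fin n => if p.1 = p.2 then (1:ℂ) else 0) ⬝ᵥ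
      (choi Λ *ᵥ fun p : Fin n × Fin n => if p.1 = p.2 then (1:ℂ) else 0)
    = ∑ i, ∑ j, (Λ (Eb i j)) i j := by
  have hv : (choi Λ *ᵥ fun p : Fin n × Fin n => if p.1 = p.2 then (1:ℂ) else 0)
      = fun p => ∑ j, Λ (Eb p.1 j) p.2 j := by
    funext p
    simp [Matrix.mulVec, dotProduct, choi_apply, Fintype.sum_prod_type, mul_ite,
      Finset.sum_ite_eq]
  rw [hv]
  simp [dotProduct, Fintype.sum_prod_type, ite_mul, Finset.sum_ite_eq, apply_ite (star : ℂ → ℂ)]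



lemma sum_rotate3 {M : Type*} [AddCommMonoid M] {ι κ γ : Type*} [Fintype ι] [Fintype κ]
    [Fintype γ] (f : ι → κ → γ → M) :
    ∑ i, ∑ j, ∑ l, f i j l = ∑ l, ∑ i, ∑ j, f i j l :=
  (Finset.sum_congr rfl fun _ _ => Finset.sum_comm).trans Finset.sum_comm

lemma sum_rotate4 {M : Type*} [AddCommMonoid M] {ι κ γ δ : Type*} [Fintype ι] [Fintype κ]
    [Fintype γ] [Fintype δ] (f : ι → κ → γ → δ → M) :
    ∑ i, ∑ j, ∑ l, ∑ d, f i j l d = ∑ d, ∑ i, ∑ j, ∑ l, f i j l d :=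
  (Finset.sum_congr rfl fun _ _ => sum_rotate3 _).trans Finset.sum_comm

def blk {m n : ℕ} (X : Mat2 m n) (i j : Fin m) : Mat n := Matrix.of fun a b => X (i, a) (j, b)

def ublk {m n : ℕ} (u : Fin m × Fin n → ℂ) (i : Fin m) : Fin n → ℂ := fun a => u (i, a)

def Theta {m n : ℕ} (u : Fin m × Fin n → ℂ) (X : Mat2 m n) (Y : Mat n) : Mat n :=
  ∑ i, ∑ j, (star (ublk u i) ⬝ᵥ (Y *ᵥ ublk u j)) • blk X i j

lemma rmap_apply' {m n : ℕ} (Φ : Mat n → Mat n) (X : Mat2 m n) (p q : Fin m × Fin n) :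
    rmap Φ X p q = Φ (blk X p.1 q.1) p.2 q.2 := rfl

lemma ad_cp {n : ℕ} (K : Mat n) : IsCP (fun Y => K * Y * Kᴴ) := by
  intro m X hX
  have h : rmap (fun Y => K * Y * Kᴴ) X =
      (Matrix.of fun p q : Fin m × Fin n => if p.1 = q.1 then K p.2 q.2 else 0) * X *
      (Matrix.of fun p q : Fin m × Fin n => if p.1 = q.1 then K p.2 q.2 else 0)ᴴ := by
    ext p q
    simp only [rmap_apply', Matrix.mul_apply, Matrix.conjTranspose_apply, Matrix.of_apply,
      blk, Fintype.sum_prod_type]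
    rw [Finset.sum_comm]
    simp only [ite_mul, zero_mul, mul_ite, mul_zero, Finset.sum_ite_eq, Finset.mem_univ,
      if_true]
    have collapse : ∀ (f : Fin m → Fin n → ℂ) (i : Fin m),
        (∑ a : Fin m, ∑ b : Fin n, if i = a then f a b else 0) = ∑ b, f i b := by
      intro f i
      rw [Finset.sum_comm]
      simp
    simp only [apply_ite (star : ℂ → ℂ), star_zero, mul_ite, mul_zero, ite_mul, zero_mul,
      Finset.sum_ite_eq, Finset.mem_univ, if_true, collapse]
  rw [h]
  exact hX.mul_mul_conjTranspose_same _

lemma cp_sum {n : ℕ} {ι : Type*} [Fintype ι] (f : ι → Mat n → Mat n) (hf : ∀ r, IsCP (f r)) :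
    IsCP (fun Y => ∑ r, f r Y) := by
  intro m X hX
  have h : rmap (fun Y => ∑ r, f r Y) X = ∑ r, rmap (f r) X := by
    ext p q
    simp [rmap, Matrix.sum_apply]
  rw [h]
  exact Finset.sum_induction _ _ (fun a b ha hb => ha.add hb) Matrix.PosSemidef.zero
    (fun r _ => hf r m X hX)

lemma theta_cp {m n : ℕ} (u : Fin m × Fin n → ℂ) {X : Mat2 m n} (hX : X.PosSemidef) :
    IsCP (Theta u X) := by
  obtain ⟨B, hB⟩ : ∃ B : Mat2 m n, X = Bᴴ * B := by
    open scoped MatrixOrder in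
    refine ⟨CFC.sqrt X, ?_⟩
    have h0 : (0:Mat2 m n) ≤ X := Matrix.nonneg_iff_posSemidef.mpr hX
    rw [(Matrix.nonneg_iff_posSemidef.mp (CFC.sqrt_nonneg X)).1.eq, CFC.sqrt_mul_sqrt_self X h0]
  let K : Fin m × Fin n → Mat n := fun r =>
    Matrix.of fun k a => ∑ i, star (B r (i, k)) * star (u (i, a))
  have hTheta : Theta u X = fun Y => ∑ r, K r * Y * (K r)ᴴ := by
    funext Y
    ext k l
    have hK : ∀ (r : Fin m × Fin n) (a b : Fin n), K r a b
        = ∑ i, star (B r (i, a)) * star (u (i, b)) := fun _ _ _ => rfl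
    simp only [Theta, Matrix.sum_apply, Matrix.smul_apply, smul_eq_mul, blk, ublk,
      dotProduct, mulVec, Matrix.of_apply, hB, Matrix.mul_apply, Matrix.conjTranspose_apply,
      hK, star_sum, star_mul', star_star, Pi.star_apply, Finset.sum_mul, Finset.mul_sum]
    rw [sum_rotate3]
    refine Finset.sum_congr rfl fun r _ => ?_
    rw [sum_rotate4, sum_rotate4]
    conv_lhs => rw [Finset.sum_comm]
    refine Finset.sum_congr rfl fun b _ => ?_
    rw [sum_rotate3]
    refine Finset.sum_congr rfl fun j _ => Finset.sum_congr rfl fun a _ =>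
      Finset.sum_congr rfl fun i _ => ?_
    ring
  rw [hTheta]
  exact cp_sum (fun r Y => K r * Y * (K r)ᴴ) (fun r => ad_cp (K r))

lemma theta_Eb {m n : ℕ} (u : Fin m × Fin n → ℂ) (X : Mat2 m n) (k l : Fin n) :
    Theta u X (Eb k l) = ∑ i, ∑ j, (star (u (i, k)) * u (j, l)) • blk X i j := by
  unfold Theta
  refine Finset.sum_congr rfl fun i _ => Finset.sum_congr rfl fun j _ => ?_
  congr 1
  simp [dotProduct, mulVec, ublk, Matrix.single, ite_and, ite_mul, mul_ite,
    Finset.sum_ite_eq, Finset.mul_sum]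

lemma key_quad {n m : ℕ} {Ψ Ψd : Mat n → Mat n} (hadj : IsAdjoint Ψ Ψd)
    (hΨd : IsLinearMap ℂ Ψd) (Φ : Mat n → Mat n) (hΦlin : IsLinearMap ℂ Φ)
    (X : Mat2 m n) (u : Fin m × Fin n → ℂ) :
    star u ⬝ᵥ (rmap (Ψd ∘ Φ) X *ᵥ u) = ((choi (Φ ∘ Theta u X)) * (choi Ψ)).trace := by
  rw [pair_adj hadj]
  have hrhs : ∀ k l : Fin n, Ψd ((Φ ∘ Theta u X) (Eb k l))
      = ∑ i, ∑ j, (star (u (i, k)) * u (j, l)) • Ψd (Φ (blk X i j)) := by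
    intro k l
    rw [Function.comp_apply, theta_Eb]
    let Φl : Mat n →ₗ[ℂ] Mat n := IsLinearMap.mk' Φ hΦlin
    let Ψl : Mat n →ₗ[ℂ] Mat n := IsLinearMap.mk' Ψd hΨd
    show Ψl (Φl _) = _
    simp only [map_sum, _root_.map_smul]
    rfl
  have hL : star u ⬝ᵥ (rmap (Ψd ∘ Φ) X *ᵥ u)
      = ∑ k, ∑ l, ∑ i, ∑ j, (star (u (i, k)) * u (j, l)) * Ψd (Φ (blk X i j)) k l := by
    simp only [dotProduct, mulVec, Fintype.sum_prod_type, Finset.mul_sum, rmap_apply',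
      Function.comp_apply]
    rw [Finset.sum_comm]
    refine Finset.sum_congr rfl fun k _ => ?_
    rw [sum_rotate3]
    refine Finset.sum_congr rfl fun l _ => Finset.sum_congr rfl fun i _ =>
      Finset.sum_congr rfl fun j _ => ?_
    simp only [Pi.star_apply]
    ring
  rw [hL]
  refine Finset.sum_congr rfl fun k _ => Finset.sum_congr rfl fun l _ => ?_
  rw [hrhs k l]
  simp [Matrix.sum_apply, Matrix.smul_apply, smul_eq_mul]

end Aux

/-- For a right-CP-invariant cone `C`, `Ψ† ∘ Φ` is completely positive
for all `Φ ∈ C` iff `Ψ ∈ C°`. -/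
theorem stmt4 (n : ℕ) (C : Set (Mat n → Mat n))
    (hClin : ∀ Φ ∈ C, IsLinearMap ℂ Φ)
    (hcone : IsConvexConeMaps C) (hR : RightCPInv C)
    (Ψ Ψd : Mat n → Mat n) (hΨ : IsLinearMap ℂ Ψ) (hΨd : IsLinearMap ℂ Ψd)
    (hadj : IsAdjoint Ψ Ψd) :
    (∀ Φ ∈ C, IsCP (Ψd ∘ Φ)) ↔ Ψ ∈ dualC C := by
  constructor
  · intro h
    refine ⟨hΨ, fun Φ hΦ => ?_⟩
    have hpsd := h Φ hΦ n (Emat n) Emat_posSemidef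
    have h0 := hpsd.dotProduct_mulVec_nonneg (fun p : Fin n × Fin n => if p.1 = p.2 then (1:ℂ) else 0)
    rw [show rmap (Ψd ∘ Φ) (Emat n) = choi (Ψd ∘ Φ) from rfl, quad_diagvec] at h0
    rw [pair_adj hadj Φ]
    simpa [Function.comp] using h0
  · intro h Φ hΦ m X hX
    apply posSemidef_of_quad
    intro u
    rw [key_quad hadj hΨd Φ (hClin Φ hΦ) X u]
    exact h.2 _ (hR Φ hΦ _ (theta_cp u hX))
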